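/- Let n be odd. In F_2[X]/(Q_n(X)), the element Q_{(n-1)/2}(x) + Q_{(n-3)/2}(x) is invertible, and hence the all-on configuration sum_{i=0}^{n-1} Q_i(x) = Q_{(n-1)/2}(x) * (Q_{(n-1)/2}(x) + Q_{(n-3)/2}(x)) generates the same ideal as the central element c_n = Q_{(n-1)/2}(x); in particular the central configuration is divisible by the all-on configuration. -/

import Mathlib

set_option linter.unusedSectionVars false

section Aux

variable (Q : ℤ → Polynomial (ZMod 2)) (h0 : Q 0 = 1) (h1 : Q 1 = Polynomial.X)
    (hrec : ∀ j : ℤ, Q (j + 1) = Polynomial.X * Q j + Q (j - 1))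

lemma aux_sq (a b : Polynomial (ZMod 2)) : (a + b)^2 = a^2 + b^2 := add_pow_char _ _ _

lemma aux_two : (2 : Polynomial (ZMod 2)) = 0 := by
  have : ((2:ℕ) : Polynomial (ZMod 2)) = 0 := by
    rw [← Polynomial.C_eq_natCast]
    norm_num
    decide
  exact_mod_cast this

include h0 h1 hrec

lemma aux_neg1 : Q (-1) = 0 := by
  have h := hrec 0
  norm_num [h0, h1] at h
  exact h

lemma aux_double : ∀ m : ℕ, Q (2*m) = Q m ^ 2 + Q ((m:ℤ) - 1) ^ 2 ∧
    Q (2*m+1) = Polynomial.X * Q m ^ 2 := by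
  intro m
  induction m with
  | zero =>
    constructor
    · simp [h0, aux_neg1 Q h0 h1 hrec]
    · simp [h0, h1]
  | succ k ih =>
    obtain ⟨ih1, ih2⟩ := ih
    have hk1 : Q ((k:ℤ) + 1) = Polynomial.X * Q k + Q ((k:ℤ) - 1) := hrec k
    push_cast at ih1 ih2 ⊢
    rw [show (k:ℤ) + 1 - 1 = (k:ℤ) from by ring]
    have h2k1 := hrec (2*(k:ℤ)+1)
    rw [show 2*(k:ℤ)+1+1 = 2*((k:ℤ)+1) from by ring,
        show 2*(k:ℤ)+1-1 = 2*(k:ℤ) from by ring] at h2k1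
    have h2k2 := hrec (2*(k:ℤ)+2)
    rw [show 2*(k:ℤ)+2+1 = 2*((k:ℤ)+1)+1 from by ring,
        show 2*(k:ℤ)+2-1 = 2*(k:ℤ)+1 from by ring,
        show 2*(k:ℤ)+2 = 2*((k:ℤ)+1) from by ring] at h2k2
    have hsq : Q ((k:ℤ)+1) ^ 2 = (Polynomial.X * Q (k:ℤ)) ^ 2 + Q ((k:ℤ)-1) ^ 2 := by
      rw [hk1]; exact aux_sq _ _
    have e1 : Q (2*((k:ℤ)+1)) = Q ((k:ℤ)+1) ^ 2 + Q (k:ℤ) ^ 2 := by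
      rw [h2k1, ih1, ih2, hsq]; ring
    refine ⟨e1, ?_⟩
    rw [h2k2, e1, ih2]
    linear_combination (Polynomial.X * Q (k:ℤ)^2) * aux_two

lemma aux_sum : ∀ m : ℕ, ∑ i ∈ Finset.range (2*m+1), Q i =
    Q m ^ 2 + Q m * Q ((m:ℤ) - 1) := by
  intro m
  induction m with
  | zero => simp [h0, aux_neg1 Q h0 h1 hrec]
  | succ k ih =>
    have hrange : 2*(k+1)+1 = (2*k+1) + 1 + 1 := by ring
    rw [hrange, Finset.sum_range_succ, Finset.sum_range_succ, ih]
    obtain ⟨hd1, hd2⟩ := aux_double Q h0 h1 hrec (k+1)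
    obtain ⟨_, hd2'⟩ := aux_double Q h0 h1 hrec k
    have hk1 : Q ((k:ℤ) + 1) = Polynomial.X * Q k + Q ((k:ℤ) - 1) := hrec k
    have hi1 : ((2*k+1 : ℕ) : ℤ) = 2*(k:ℤ)+1 := by push_cast; ring
    have hi2 : ((2*k+1+1 : ℕ) : ℤ) = 2*((k:ℤ)+1) := by push_cast; ring
    rw [hi1, hi2]
    push_cast at hd1 hd2 hd2' ⊢
    rw [show (k:ℤ) + 1 - 1 = (k:ℤ) from by ring] at hd1 ⊢
    rw [hd2', hd1]
    linear_combination (Q (k:ℤ)^2) * aux_two - Q (k:ℤ) * hk1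

lemma aux_coprime : ∀ m : ℕ, IsCoprime (Q m) (Q ((m:ℤ) - 1)) := by
  intro m
  induction m with
  | zero => simp only [Nat.cast_zero, h0]; exact isCoprime_one_left
  | succ k ih =>
    have hk1 : Q ((k:ℤ) + 1) = Polynomial.X * Q k + Q ((k:ℤ) - 1) := hrec k
    have h : IsCoprime (Q ((k:ℤ)-1) + Polynomial.X * Q k) (Q k) :=
      ih.symm.add_mul_right_left Polynomial.X
    push_cast
    rw [show ((k:ℤ)+1-1) = (k:ℤ) from by ring, hk1]
    rw [add_comm] at h
    exact h

lemma aux_coeff : ∀ m : ℕ, (Q m + Q ((m:ℤ) - 1)).coeff 0 = 1 := by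
  intro m
  induction m with
  | zero => simp [h0, aux_neg1 Q h0 h1 hrec]
  | succ k ih =>
    have hk1 : Q ((k:ℤ) + 1) = Polynomial.X * Q k + Q ((k:ℤ) - 1) := hrec k
    push_cast
    rw [show ((k:ℤ)+1-1) = (k:ℤ) from by ring, hk1]
    have hx : (Polynomial.X * Q (k:ℤ)).coeff 0 = 0 := by
      rw [Polynomial.mul_coeff_zero]; simp
    calc (Polynomial.X * Q (k:ℤ) + Q ((k:ℤ)-1) + Q (k:ℤ)).coeff 0
        = (Polynomial.X * Q (k:ℤ)).coeff 0 + (Q (k:ℤ) + Q ((k:ℤ)-1)).coeff 0 := by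
          simp only [Polynomial.coeff_add]; ring
      _ = 1 := by rw [hx, ih]; ring

end Aux

/-- For odd `n`, in `F_2[X]/(Q_n)` the element `Q_{(n-1)/2}(x) + Q_{(n-3)/2}(x)` is
invertible; the all-on configuration `∑ Q_i(x)` factors as
`Q_{(n-1)/2}(x) (Q_{(n-1)/2}(x) + Q_{(n-3)/2}(x))`, generates the same ideal as the
central element `c_n = Q_{(n-1)/2}(x)`, and in particular divides it.
(The Chebyshev family is indexed by `ℤ` so that `(n-3)/2` makes sense for `n = 1`.) -/
theorem stmt_16 (Q : ℤ → Polynomial (ZMod 2)) (h0 : Q 0 = 1) (h1 : Q 1 = Polynomial.X)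
    (hrec : ∀ j : ℤ, Q (j + 1) = Polynomial.X * Q j + Q (j - 1))
    (n : ℕ) (hn : Odd n) :
    let A := Polynomial (ZMod 2) ⧸ Ideal.span {Q (n : ℤ)}
    let mk : Polynomial (ZMod 2) → A := Ideal.Quotient.mk _
    let u : A := mk (Q (((n : ℤ) - 1) / 2) + Q (((n : ℤ) - 3) / 2))
    let allon : A := ∑ i ∈ Finset.range n, mk (Q (i : ℤ))
    let c : A := mk (Q (((n : ℤ) - 1) / 2))
    IsUnit u ∧ allon = c * u ∧ Ideal.span {allon} = Ideal.span {c} ∧ allon ∣ c := by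
  intro A mk u allon c
  obtain ⟨m, rfl⟩ : ∃ m : ℕ, n = 2*m+1 := by
    obtain ⟨m, hm⟩ := hn; exact ⟨m, by omega⟩
  have hi1 : (((2*m+1 : ℕ) : ℤ) - 1)/2 = (m:ℤ) := by push_cast; omega
  have hi2 : (((2*m+1 : ℕ) : ℤ) - 3)/2 = (m:ℤ) - 1 := by push_cast; omega
  have hin : ((2*m+1 : ℕ) : ℤ) = 2*(m:ℤ)+1 := by push_cast; ring
  set up : Polynomial (ZMod 2) := Q (m:ℤ) + Q ((m:ℤ)-1) with hup
  have hQn : Q ((2*m+1 : ℕ) : ℤ) = Polynomial.X * Q (m:ℤ) ^ 2 := by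
    rw [hin]
    have := (aux_double Q h0 h1 hrec m).2
    push_cast at this; exact this
  have hcop : IsCoprime up (Q ((2*m+1 : ℕ) : ℤ)) := by
    rw [hQn]
    have hcx : IsCoprime up Polynomial.X := by
      refine ((Polynomial.irreducible_X (R := ZMod 2)).coprime_iff_not_dvd.mpr ?_).symm
      rw [Polynomial.X_dvd_iff]
      have := aux_coeff Q h0 h1 hrec m
      rw [hup, this]
      exact one_ne_zero
    have hcq : IsCoprime up (Q (m:ℤ)) := by
      have h := (aux_coprime Q h0 h1 hrec m).symm
      have h' : IsCoprime (Q ((m:ℤ)-1) + 1 * Q (m:ℤ)) (Q (m:ℤ)) := h.add_mul_right_left 1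
      rw [one_mul] at h'
      rw [hup, add_comm]
      exact h'
    exact hcx.mul_right (hcq.pow_right)
  have hu_eq : u = mk up := by rw [hup]; simp only [u, hi1, hi2]
  have hunit : IsUnit u := by
    obtain ⟨a, b, hab⟩ := hcop
    rw [hu_eq]
    refine IsUnit.of_mul_eq_one (mk a) ?_
    have h := congrArg (Ideal.Quotient.mk (Ideal.span {Q ((2*m+1 : ℕ) : ℤ)})) hab
    have hb : Ideal.Quotient.mk (Ideal.span {Q ((2*m+1 : ℕ) : ℤ)})
        (b * Q ((2*m+1 : ℕ) : ℤ)) = 0 := by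
      rw [Ideal.Quotient.eq_zero_iff_mem]
      exact Ideal.mul_mem_left _ _ (Ideal.subset_span rfl)
    simp only [mk]
    rw [map_add, hb, add_zero, map_one] at h
    rw [mul_comm, ← map_mul]
    rw [map_mul] at h
    rw [← map_mul] at h
    exact h
  have hsum : allon = c * u := by
    have hpoly : ∑ i ∈ Finset.range (2*m+1), Q i =
        Q (m:ℤ) * (Q (m:ℤ) + Q ((m:ℤ)-1)) := by
      rw [aux_sum Q h0 h1 hrec m]; ring
    have h : allon = mk (∑ i ∈ Finset.range (2*m+1), Q i) := by
      simp only [allon, mk, map_sum]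
    rw [h, hpoly, hu_eq]
    simp only [c, mk, hi1, hup, map_mul]
  refine ⟨hunit, hsum, ?_, ?_⟩
  · rw [hsum]; exact Ideal.span_singleton_mul_right_unit hunit c
  · obtain ⟨v, hv⟩ := hunit.exists_right_inv
    exact ⟨v, by rw [hsum, mul_assoc, hv, mul_one]⟩
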